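/- For α ∈ (0,1) and z ∈ ℂ \ (−∞,0]: ∫₀^∞ y^{α−1} log y/(y+z) dy = (π/sin(απ)) z^{α−1} (log z − π cot(απ)) using principal branches. -/

import Mathlib

open MeasureTheory Set Complex Filter

section aux

-- lower bound on |t+z| for fixed z in slitPlane
lemma lb0 {z : ℂ} (hz : z ∈ Complex.slitPlane) :
    ∃ m : ℝ, 0 < m ∧ ∀ t : ℝ, 0 ≤ t → m ≤ ‖(t:ℂ) + z‖ := by
  rcases Complex.mem_slitPlane_iff.mp hz with h | h
  · by_cases him : z.im = 0
    · refine ⟨z.re, h, fun t ht => ?_⟩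
      calc z.re ≤ t + z.re := by linarith
      _ = ((t:ℂ) + z).re := by simp
      _ ≤ |((t:ℂ) + z).re| := le_abs_self _
      _ ≤ ‖(t:ℂ)+z‖ := Complex.abs_re_le_norm _
    · refine ⟨|z.im|, abs_pos.mpr him, fun t ht => ?_⟩
      calc |z.im| = |((t:ℂ)+z).im| := by simp
      _ ≤ ‖(t:ℂ)+z‖ := Complex.abs_im_le_norm _
  · refine ⟨|z.im|, abs_pos.mpr h, fun t ht => ?_⟩
    calc |z.im| = |((t:ℂ)+z).im| := by simp
    _ ≤ ‖(t:ℂ)+z‖ := Complex.abs_im_le_norm _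

-- uniform lower bound on a ball
lemma lb_ball {z₀ : ℂ} (hz : z₀ ∈ Complex.slitPlane) :
    ∃ ε : ℝ, 0 < ε ∧ ∃ c : ℝ, 0 < c ∧ ∀ z ∈ Metric.ball z₀ ε, ∀ t : ℝ, 0 ≤ t →
      c * (1 + t) ≤ ‖(t:ℂ) + z‖ := by
  obtain ⟨m, hm, hml⟩ := lb0 hz
  set R := ‖z₀‖ with hR
  have hR0 : 0 ≤ R := norm_nonneg _
  refine ⟨m/2, by positivity, min (m / (2*(2*R+m+3))) (1/4), ?_, ?_⟩
  · have : 0 < m / (2*(2*R+m+3)) := by positivity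
    exact lt_min this (by norm_num)
  intro z hzb t ht
  have hdist : ‖z₀ - z‖ < m/2 := by
    rw [Metric.mem_ball, Complex.dist_eq] at hzb
    rw [← norm_neg]; simpa [neg_sub] using hzb
  have htri : ‖(t:ℂ) + z₀‖ ≤ ‖(t:ℂ) + z‖ + ‖z₀ - z‖ := by
    calc ‖(t:ℂ) + z₀‖ = ‖((t:ℂ) + z) + (z₀ - z)‖ := by ring_nf
    _ ≤ _ := norm_add_le _ _
  rcases le_or_gt t (2*R + m + 2) with hts | htl
  · have h1 : m ≤ ‖(t:ℂ) + z₀‖ := hml t ht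
    have h2 : m/2 ≤ ‖(t:ℂ) + z‖ := by linarith
    calc min (m / (2*(2*R+m+3))) (1/4) * (1+t) ≤ (m / (2*(2*R+m+3))) * (1+t) := by
          apply mul_le_mul_of_nonneg_right (min_le_left _ _); linarith
    _ ≤ (m / (2*(2*R+m+3))) * (2*R+m+3) := by
          apply mul_le_mul_of_nonneg_left (by linarith) (by positivity)
    _ = m/2 := by field_simp
    _ ≤ _ := h2
  · have h1 : t - R ≤ ‖(t:ℂ) + z₀‖ := by
      have : ‖(t:ℂ)‖ ≤ ‖(t:ℂ) + z₀‖ + ‖z₀‖ := by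
        calc ‖(t:ℂ)‖ = ‖((t:ℂ) + z₀) + (-z₀)‖ := by ring_nf
        _ ≤ ‖(t:ℂ) + z₀‖ + ‖-z₀‖ := norm_add_le _ _
        _ = ‖(t:ℂ) + z₀‖ + ‖z₀‖ := by rw [norm_neg]
      have habs : ‖(t:ℂ)‖ = t := by
        rw [Complex.norm_real, Real.norm_eq_abs, _root_.abs_of_nonneg ht]
      rw [habs] at this; linarith
    have h2 : t - R - m/2 ≤ ‖(t:ℂ) + z‖ := by linarith
    calc min (m / (2*(2*R+m+3))) (1/4) * (1+t) ≤ (1/4) * (1+t) := by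
          apply mul_le_mul_of_nonneg_right (min_le_right _ _); linarith
    _ ≤ t - R - m/2 := by linarith
    _ ≤ _ := h2

-- integrability of the dominating function
lemma int_aux {σ : ℝ} (h1 : 0 < σ) (h2 : σ < 1) :
    IntegrableOn (fun t : ℝ => t ^ (σ-1) * (1+t)⁻¹) (Ioi (0:ℝ)) := by
  have hmeas : ∀ s : Set ℝ, s ⊆ Ioi (0:ℝ) → MeasurableSet s →
      AEStronglyMeasurable (fun t : ℝ => t ^ (σ-1) * (1+t)⁻¹) (volume.restrict s) := by
    intro s hsub hms
    apply ContinuousOn.aestronglyMeasurable _ hms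
    apply ContinuousOn.mul
    · intro t ht
      exact (Real.continuousAt_rpow_const t _ (Or.inl (ne_of_gt (hsub ht)))).continuousWithinAt
    · apply ContinuousOn.inv₀ (by fun_prop)
      intro t ht
      have := hsub ht
      simp only [mem_Ioi] at this
      positivity
  rw [← Ioc_union_Ioi_eq_Ioi (zero_le_one : (0:ℝ) ≤ 1)]
  apply IntegrableOn.union
  · have base : IntegrableOn (fun t:ℝ => t^(σ-1)) (Ioc (0:ℝ) 1) := by
      rw [integrableOn_Ioc_iff_integrableOn_Ioo, intervalIntegral.integrableOn_Ioo_rpow_iff one_pos]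
      linarith
    apply base.mono' (hmeas _ Ioc_subset_Ioi_self measurableSet_Ioc)
    filter_upwards [ae_restrict_mem measurableSet_Ioc] with t ht
    have h0 : (0:ℝ) < t := ht.1
    have hp : (0:ℝ) < 1 + t := by linarith
    rw [Real.norm_eq_abs, _root_.abs_of_nonneg (by positivity)]
    calc t ^ (σ-1) * (1+t)⁻¹ ≤ t ^ (σ-1) * 1 := by
          apply mul_le_mul_of_nonneg_left _ (by positivity)
          rw [inv_le_one_iff₀]; right; linarith
    _ = t ^ (σ-1) := mul_one _
  · have base : IntegrableOn (fun t:ℝ => t^(σ-2)) (Ioi (1:ℝ)) :=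
      integrableOn_Ioi_rpow_of_lt (by linarith) one_pos
    apply base.mono' (hmeas _ (Ioi_subset_Ioi zero_le_one) measurableSet_Ioi)
    filter_upwards [ae_restrict_mem measurableSet_Ioi] with t ht
    have h1t : (1:ℝ) < t := ht
    have h0 : (0:ℝ) < t := by linarith
    rw [Real.norm_eq_abs, _root_.abs_of_nonneg (by positivity)]
    calc t ^ (σ-1) * (1+t)⁻¹ ≤ t ^ (σ-1) * t⁻¹ := by
          apply mul_le_mul_of_nonneg_left _ (by positivity)
          apply inv_anti₀ h0; linarith
    _ = t ^ (σ-2) := by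
          rw [← Real.rpow_neg_one t, ← Real.rpow_add h0]; ring_nf

end aux
lemma image_f : (fun u : ℝ => u / (1 - u)) '' (Ioo 0 1) = Ioi 0 := by
  ext t
  constructor
  · rintro ⟨u, ⟨hu0, hu1⟩, rfl⟩
    have : 0 < 1 - u := by linarith
    exact div_pos hu0 this
  · intro ht
    have ht' : (0:ℝ) < t := ht
    refine ⟨t / (1 + t), ⟨by positivity, ?_⟩, ?_⟩
    · rw [div_lt_one (by linarith)]; linarith
    · field_simp
      ring

lemma beta_eval {s : ℂ} (h1 : 0 < s.re) (h2 : s.re < 1) :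
    ∫ t in Ioi (0:ℝ), (t:ℂ) ^ (s - 1) / (1 + (t:ℂ)) = ↑Real.pi / Complex.sin (Real.pi * s) := by
  have hG : Complex.Gamma s * Complex.Gamma (1 - s) = ↑Real.pi / Complex.sin (Real.pi * s) :=
    Complex.Gamma_mul_Gamma_one_sub s
  have h1s : 0 < (1 - s).re := by simp only [Complex.sub_re, Complex.one_re]; linarith
  have hB := Complex.Gamma_mul_Gamma_eq_betaIntegral h1 h1s
  rw [show s + (1 - s) = 1 by ring, Complex.Gamma_one, one_mul] at hB
  rw [← hG, hB]
  rw [Complex.betaIntegral, intervalIntegral.integral_of_le zero_le_one,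
    MeasureTheory.integral_Ioc_eq_integral_Ioo]
  have hder : ∀ u ∈ Ioo (0:ℝ) 1, HasDerivWithinAt (fun u : ℝ => u / (1 - u))
      (((1 - u) ^ 2)⁻¹) (Ioo 0 1) u := by
    intro u hu
    have h1u : 1 - u ≠ 0 := by have := hu.2; intro h; linarith
    have := (hasDerivAt_id u).div ((hasDerivAt_const u 1).sub (hasDerivAt_id u)) h1u
    refine (this.congr_deriv ?_).hasDerivWithinAt
    simp only [Pi.sub_apply, id]
    ring
  have hinj : InjOn (fun u : ℝ => u / (1 - u)) (Ioo 0 1) := by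
    intro a ha b hb h
    have h1a : 1 - a ≠ 0 := by have := ha.2; intro h; linarith
    have h1b : 1 - b ≠ 0 := by have := hb.2; intro h; linarith
    simp only at h
    rw [div_eq_div_iff h1a h1b] at h
    nlinarith [h]
  have key := integral_image_eq_integral_abs_deriv_smul measurableSet_Ioo hder hinj
    (fun t : ℝ => (t:ℂ) ^ (s - 1) / (1 + (t:ℂ)))
  rw [image_f] at key
  rw [key]
  apply setIntegral_congr_fun measurableSet_Ioo
  intro u hu
  obtain ⟨hu0, hu1⟩ := hu
  have hw : (0:ℝ) < 1 - u := by linarith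
  set W : ℂ := ((1 - u : ℝ) : ℂ) with hW
  have hWne : W ≠ 0 := by rw [hW]; exact_mod_cast hw.ne'
  have harg : W.arg ≠ Real.pi := by
    rw [hW, Complex.arg_ofReal_of_nonneg hw.le]
    exact Real.pi_ne_zero.symm
  have hAne : W ^ (s - 1) ≠ 0 := by
    simp [Complex.cpow_eq_zero_iff, hWne]
  have hWs : W ^ (s - 1) * W = W ^ s := by
    calc W ^ (s-1) * W = W ^ (s-1) * W ^ (1:ℂ) := by rw [Complex.cpow_one]
    _ = W ^ (s - 1 + 1) := (Complex.cpow_add _ _ hWne).symm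
    _ = W ^ s := by norm_num
  have e1 : (1 : ℂ) + ↑(u / (1 - u)) = W⁻¹ := by
    rw [hW]
    have h' : (1:ℂ) - (u:ℂ) ≠ 0 := by
      rw [show (1:ℂ) - (u:ℂ) = ((1-u:ℝ):ℂ) by push_cast; ring]
      exact_mod_cast hw.ne'
    push_cast
    field_simp
    ring
  have e2 : ((u / (1 - u) : ℝ) : ℂ) ^ (s - 1)
      = (u:ℂ) ^ (s - 1) * (W ^ (s - 1))⁻¹ := by
    rw [show (u / (1 - u) : ℝ) = u * (1 - u)⁻¹ by ring, Complex.ofReal_mul,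
      Complex.mul_cpow_ofReal_nonneg hu0.le (by positivity : (0:ℝ) ≤ (1-u)⁻¹),
      Complex.ofReal_inv, ← hW, Complex.inv_cpow _ _ harg]
  have e3 : (1 : ℂ) - ↑u = W := by rw [hW]; push_cast; ring
  simp only
  rw [e1, e2, e3, abs_of_pos (by positivity : (0:ℝ) < ((1-u)^2)⁻¹), Complex.real_smul,
    show ((((1-u)^2)⁻¹ : ℝ) : ℂ) = (W^2)⁻¹ by rw [hW]; push_cast; ring,
    show (1:ℂ) - s - 1 = -s by ring, Complex.cpow_neg, ← hWs]
  field_simp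
lemma eval_ofReal {s : ℂ} (h1 : 0 < s.re) (h2 : s.re < 1) {x : ℝ} (hx : 0 < x) :
    ∫ t in Ioi (0:ℝ), (t:ℂ) ^ (s - 1) / ((t:ℂ) + x)
      = ↑Real.pi / Complex.sin (Real.pi * s) * (x:ℂ) ^ (s - 1) := by
  have hxC : (x:ℂ) ≠ 0 := by exact_mod_cast hx.ne'
  have step := integral_comp_mul_left_Ioi
    (fun t : ℝ => (t:ℂ) ^ (s - 1) / ((t:ℂ) + x)) 0 hx
  simp only [mul_zero] at step
  have congr1 : (∫ u in Ioi (0:ℝ), ((x * u : ℝ):ℂ) ^ (s - 1) / (((x * u : ℝ):ℂ) + x))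
      = (x:ℂ) ^ (s - 1) * (x:ℂ)⁻¹ * ∫ u in Ioi (0:ℝ), (u:ℂ) ^ (s - 1) / (1 + (u:ℂ)) := by
    rw [← MeasureTheory.integral_const_mul]
    apply setIntegral_congr_fun measurableSet_Ioi
    intro u hu
    have hu0 : (0:ℝ) < u := hu
    have huC : (1:ℂ) + (u:ℂ) ≠ 0 := by
      rw [show (1:ℂ) + (u:ℂ) = ((1+u:ℝ):ℂ) by push_cast; ring]
      exact_mod_cast (by linarith : (1+u:ℝ) ≠ 0)
    simp only
    rw [Complex.ofReal_mul, Complex.mul_cpow_ofReal_nonneg hx.le hu0.le,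
      show (x:ℂ) * (u:ℂ) + (x:ℂ) = (x:ℂ) * (1 + (u:ℂ)) by ring]
    field_simp
  rw [congr1] at step
  -- step : LHS' = x⁻¹ • ∫ ...
  have h := step.symm
  rw [beta_eval h1 h2, Complex.real_smul, Complex.ofReal_inv] at h
  have hI : (∫ t in Ioi (0:ℝ), (t:ℂ) ^ (s - 1) / ((t:ℂ) + x))
      = (x:ℂ) * ((x:ℂ)⁻¹ * ∫ t in Ioi (0:ℝ), (t:ℂ) ^ (s - 1) / ((t:ℂ) + x)) := by
    field_simp
  rw [hI, h]
  calc (x:ℂ) * ((x:ℂ) ^ (s-1) * (x:ℂ)⁻¹ * (↑Real.pi / Complex.sin (Real.pi * s)))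
      = ((x:ℂ) * (x:ℂ)⁻¹) * ((x:ℂ) ^ (s-1) * (↑Real.pi / Complex.sin (Real.pi * s))) := by ring
  _ = ↑Real.pi / Complex.sin (Real.pi * s) * (x:ℂ) ^ (s-1) := by
      rw [mul_inv_cancel₀ hxC, one_mul]; ring
lemma anal_z {s : ℂ} (h1 : 0 < s.re) (h2 : s.re < 1) :
    DifferentiableOn ℂ (fun z => ∫ t in Ioi (0:ℝ), (t:ℂ) ^ (s - 1) / ((t:ℂ) + z))
      Complex.slitPlane := by
  intro z₀ hz₀
  apply DifferentiableAt.differentiableWithinAt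
  obtain ⟨ε, hε, c, hc, hb⟩ := lb_ball hz₀
  set F : ℂ → ℝ → ℂ := fun z t => (t:ℂ) ^ (s - 1) / ((t:ℂ) + z) with hF
  set F' : ℂ → ℝ → ℂ := fun z t => -((t:ℂ) ^ (s - 1) / ((t:ℂ) + z) ^ 2) with hF'
  -- continuity/measurability helper
  have hcont : ∀ z ∈ Metric.ball z₀ ε, ContinuousOn (F z) (Ioi (0:ℝ)) := by
    intro z hz
    apply ContinuousOn.div
    · intro t ht
      exact (Complex.continuousAt_ofReal_cpow_const _ _
        (Or.inr (ne_of_gt (mem_Ioi.mp ht)))).continuousWithinAt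
    · fun_prop
    · intro t ht
      have := hb z hz t (le_of_lt (mem_Ioi.mp ht))
      intro h0
      rw [h0] at this
      simp only [norm_zero] at this
      nlinarith [mem_Ioi.mp ht]
  have hne : ∀ z ∈ Metric.ball z₀ ε, ∀ t : ℝ, 0 < t → ((t:ℂ) + z) ≠ 0 := by
    intro z hz t ht h0
    have := hb z hz t ht.le
    rw [h0] at this
    simp only [norm_zero] at this
    nlinarith
  have hnorm : ∀ z ∈ Metric.ball z₀ ε, ∀ t : ℝ, 0 < t →
      ‖F z t‖ = t ^ (s.re - 1) / ‖(t:ℂ) + z‖ := by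
    intro z hz t ht
    rw [hF]
    simp only [norm_div]
    rw [Complex.norm_cpow_eq_rpow_re_of_pos ht]
    simp [Complex.sub_re]
  have hz₀b : z₀ ∈ Metric.ball z₀ ε := Metric.mem_ball_self hε
  have hint : Integrable (F z₀) (volume.restrict (Ioi 0)) := by
    apply Integrable.mono' (((int_aux h1 h2).const_mul c⁻¹))
      (((hcont z₀ hz₀b).aestronglyMeasurable measurableSet_Ioi))
    filter_upwards [ae_restrict_mem measurableSet_Ioi] with t ht
    have ht' : (0:ℝ) < t := ht
    rw [hnorm z₀ hz₀b t ht']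
    have hlow := hb z₀ hz₀b t ht'.le
    have h1t : (0:ℝ) < 1 + t := by linarith
    rw [div_le_iff₀ (by nlinarith : (0:ℝ) < ‖(t:ℂ)+z₀‖)]
    have : c⁻¹ * (t ^ (s.re - 1) * (1+t)⁻¹) * (c * (1+t)) = t ^ (s.re-1) := by
      field_simp
    nlinarith [Real.rpow_nonneg ht'.le (s.re - 1),
      mul_le_mul_of_nonneg_left hlow (by positivity : (0:ℝ) ≤ c⁻¹ * (t ^ (s.re - 1) * (1+t)⁻¹))]
  have hF_meas : ∀ᶠ z in nhds z₀, AEStronglyMeasurable (F z) (volume.restrict (Ioi 0)) := by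
    filter_upwards [Metric.ball_mem_nhds z₀ hε] with z hz
    exact (hcont z hz).aestronglyMeasurable measurableSet_Ioi
  have hF'_meas : AEStronglyMeasurable (F' z₀) (volume.restrict (Ioi 0)) := by
    apply ContinuousOn.aestronglyMeasurable _ measurableSet_Ioi
    apply ContinuousOn.neg
    apply ContinuousOn.div
    · intro t ht
      exact (Complex.continuousAt_ofReal_cpow_const _ _
        (Or.inr (ne_of_gt (mem_Ioi.mp ht)))).continuousWithinAt
    · fun_prop
    · intro t ht
      exact pow_ne_zero 2 (hne z₀ hz₀b t (mem_Ioi.mp ht))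
  have hbound : ∀ᵐ t ∂(volume.restrict (Ioi (0:ℝ))), ∀ z ∈ Metric.ball z₀ ε,
      ‖F' z t‖ ≤ c⁻¹ * c⁻¹ * (t ^ (s.re - 1) * (1+t)⁻¹) := by
    filter_upwards [ae_restrict_mem measurableSet_Ioi] with t ht z hz
    have ht' : (0:ℝ) < t := ht
    have h1t : (0:ℝ) < 1 + t := by linarith
    have hlow := hb z hz t ht'.le
    have habs : (0:ℝ) < ‖(t:ℂ) + z‖ := by nlinarith
    have hnrm : ‖F' z t‖ = t ^ (s.re - 1) / ‖(t:ℂ) + z‖ ^ 2 := by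
      rw [hF']
      simp only [norm_neg, norm_div, norm_pow]
      rw [Complex.norm_cpow_eq_rpow_re_of_pos ht']
      simp [Complex.sub_re]
    rw [hnrm]
    have hsq : c * c * (1 + t) ≤ ‖(t:ℂ) + z‖ ^ 2 := by
      nlinarith [mul_le_mul hlow hlow (by positivity : (0:ℝ) ≤ c*(1+t)) habs.le,
        mul_nonneg (mul_nonneg hc.le hc.le) (mul_nonneg h1t.le ht'.le)]
    rw [div_le_iff₀ (by positivity)]
    have key : c⁻¹ * c⁻¹ * (t ^ (s.re - 1) * (1+t)⁻¹) * (c * c * (1+t)) = t ^ (s.re-1) := by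
      field_simp
    nlinarith [Real.rpow_nonneg ht'.le (s.re - 1),
      mul_le_mul_of_nonneg_left hsq
        (by positivity : (0:ℝ) ≤ c⁻¹ * c⁻¹ * (t ^ (s.re - 1) * (1+t)⁻¹))]
  have hbint : Integrable (fun t : ℝ => c⁻¹ * c⁻¹ * (t ^ (s.re - 1) * (1+t)⁻¹))
      (volume.restrict (Ioi 0)) := (int_aux h1 h2).const_mul _
  have hderiv : ∀ᵐ t ∂(volume.restrict (Ioi (0:ℝ))), ∀ z ∈ Metric.ball z₀ ε,
      HasDerivAt (fun w => F w t) (F' z t) z := by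
    filter_upwards [ae_restrict_mem measurableSet_Ioi] with t ht z hz
    have ht' : (0:ℝ) < t := ht
    have hd := (((hasDerivAt_id z).const_add ((t:ℂ))).inv (hne z hz t ht')).const_mul
      ((t:ℂ) ^ (s-1))
    have : F' z t = (t:ℂ) ^ (s - 1) * (-1 / ((t:ℂ) + z) ^ 2) := by rw [hF']; ring
    have heq : (fun w => F w t) = fun w => (t:ℂ) ^ (s-1) * ((t:ℂ) + w)⁻¹ := by
      funext w; rw [hF]; simp only [div_eq_mul_inv]
    rw [this, heq]
    convert hd using 1 <;> rfl
  exact (hasDerivAt_integral_of_dominated_loc_of_deriv_le (Metric.ball_mem_nhds z₀ hε) hF_meas hint hF'_meas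
    hbound hbint hderiv).2.differentiableAt
lemma slit_preconn : IsPreconnected Complex.slitPlane := by
  apply isPreconnected_of_forall (1:ℂ)
  intro y hy
  exact ⟨segment ℝ 1 y, Complex.starConvex_one_slitPlane.segment_subset hy,
    left_mem_segment _ _ _, right_mem_segment _ _ _, (convex_segment 1 y).isPreconnected⟩

lemma eval_slit {s : ℂ} (h1 : 0 < s.re) (h2 : s.re < 1) {z : ℂ}
    (hz : z ∈ Complex.slitPlane) :
    ∫ t in Ioi (0:ℝ), (t:ℂ) ^ (s - 1) / ((t:ℂ) + z)
      = ↑Real.pi / Complex.sin (Real.pi * s) * z ^ (s - 1) := by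
  have hA : AnalyticOnNhd ℂ (fun z => ∫ t in Ioi (0:ℝ), (t:ℂ) ^ (s - 1) / ((t:ℂ) + z))
      Complex.slitPlane := (anal_z h1 h2).analyticOnNhd Complex.isOpen_slitPlane
  have hB : AnalyticOnNhd ℂ (fun z : ℂ => ↑Real.pi / Complex.sin (Real.pi * s) * z ^ (s - 1))
      Complex.slitPlane := by
    apply AnalyticOnNhd.mul analyticOnNhd_const
    exact AnalyticOnNhd.cpow analyticOnNhd_id analyticOnNhd_const (fun w hw => hw)
  have hfreq : ∃ᶠ w in nhdsWithin (1:ℂ) {(1:ℂ)}ᶜ,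
      (∫ t in Ioi (0:ℝ), (t:ℂ) ^ (s - 1) / ((t:ℂ) + w))
        = ↑Real.pi / Complex.sin (Real.pi * s) * w ^ (s - 1) := by
    have htend : Tendsto (fun n : ℕ => ((1 + 1/(n+1) : ℝ) : ℂ)) atTop
        (nhdsWithin (1:ℂ) {(1:ℂ)}ᶜ) := by
      rw [tendsto_nhdsWithin_iff]
      constructor
      · have : Tendsto (fun n : ℕ => (1 + 1/(n+1) : ℝ)) atTop (nhds 1) := by
          have h0 := tendsto_one_div_add_atTop_nhds_zero_nat (𝕜 := ℝ)
          have := h0.const_add (1:ℝ)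
          simpa using this
        have h2' := (Complex.continuous_ofReal.tendsto (1:ℝ)).comp this
        simpa [Function.comp_def] using h2'
      · apply Eventually.of_forall
        intro n
        simp only [mem_compl_iff, mem_singleton_iff]
        intro h
        have : (1 + 1/(n+1) : ℝ) = 1 := by exact_mod_cast h
        have hn : (0:ℝ) < 1/(n+1) := by positivity
        linarith
    apply htend.frequently
    apply Frequently.of_forall
    intro n
    have hx : (0:ℝ) < 1 + 1/(n+1) := by positivity
    exact eval_ofReal h1 h2 hx
  exact hA.eqOn_of_preconnected_of_frequently_eq hB slit_preconn
    Complex.one_mem_slitPlane hfreq hz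
/-- For `α ∈ (0,1)` and `z ∉ (−∞,0]`:
`∫₀^∞ y^(α−1) log y/(y+z) dy = (π/sin(απ)) z^(α−1) (log z − π cot(απ))`. -/
theorem stmt4 (α : ℝ) (hα : α ∈ Set.Ioo (0:ℝ) 1) (z : ℂ)
    (hz : ∀ x : ℝ, x ≤ 0 → z ≠ (x : ℂ)) :
    ∫ y in Set.Ioi (0:ℝ), (y : ℂ) ^ ((α : ℂ) - 1) * ((Real.log y : ℝ) : ℂ) / ((y : ℂ) + z)
      = ((Real.pi / Real.sin (α * Real.pi) : ℝ) : ℂ) * z ^ ((α : ℂ) - 1) *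
          (Complex.log z -
            (Real.pi : ℂ) * ((Real.cos (α * Real.pi) / Real.sin (α * Real.pi) : ℝ) : ℂ)) := by
  obtain ⟨hα0, hα1⟩ := hα
  have hzslit : z ∈ Complex.slitPlane := by
    by_contra h
    rw [Complex.mem_slitPlane_iff] at h
    push_neg at h
    obtain ⟨hre, him⟩ := h
    exact hz z.re hre (by apply Complex.ext <;> simp [him])
  obtain ⟨m, hm, hml⟩ := lb0 hzslit
  have hzne : z ≠ 0 := Complex.slitPlane_ne_zero hzslit
  set f : ℝ → ℂ := fun t => ((t:ℂ) + z)⁻¹ with hf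
  -- big-O package
  have hfc : LocallyIntegrableOn f (Ioi (0:ℝ)) := by
    apply ContinuousOn.locallyIntegrableOn _ measurableSet_Ioi
    apply ContinuousOn.inv₀
    · exact (Complex.continuous_ofReal.continuousOn).add continuousOn_const
    · intro t ht
      intro h0
      have := hml t (le_of_lt (mem_Ioi.mp ht))
      rw [h0] at this
      simp only [norm_zero] at this
      linarith
  have hf_top : f =O[atTop] fun t : ℝ => t ^ (-1:ℝ) := by
    rw [Asymptotics.isBigO_iff]
    refine ⟨2, ?_⟩
    filter_upwards [eventually_ge_atTop (max 1 (2 * ‖z‖))] with t ht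
    have ht1 : (1:ℝ) ≤ t := le_trans (le_max_left _ _) ht
    have htz : 2 * ‖z‖ ≤ t := le_trans (le_max_right _ _) ht
    have ht0 : (0:ℝ) < t := by linarith
    have habs : t / 2 ≤ ‖(t:ℂ) + z‖ := by
      have h1 : ‖(t:ℂ)‖ ≤ ‖(t:ℂ) + z‖ + ‖z‖ := by
        calc ‖(t:ℂ)‖ = ‖((t:ℂ) + z) + (-z)‖ := by ring_nf
        _ ≤ ‖(t:ℂ)+z‖ + ‖-z‖ := norm_add_le _ _
        _ = ‖(t:ℂ)+z‖ + ‖z‖ := by rw [norm_neg]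
      have h2 : ‖(t:ℂ)‖ = t := by
        rw [Complex.norm_real, Real.norm_eq_abs, _root_.abs_of_nonneg ht0.le]
      rw [h2] at h1
      linarith
    have habs0 : (0:ℝ) < ‖(t:ℂ) + z‖ := by linarith
    rw [hf]
    simp only [norm_inv, Real.norm_eq_abs]
    rw [Real.rpow_neg_one, _root_.abs_of_nonneg (by positivity : (0:ℝ) ≤ t⁻¹)]
    rw [inv_le_iff_one_le_mul₀ habs0]
    have : 2 * t⁻¹ * (t/2) = 1 := by field_simp
    nlinarith [mul_le_mul_of_nonneg_left habs (by positivity : (0:ℝ) ≤ 2 * t⁻¹)]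
  have hf_bot : f =O[nhdsWithin (0:ℝ) (Ioi 0)] fun t : ℝ => t ^ (-(0:ℝ)) := by
    rw [Asymptotics.isBigO_iff]
    refine ⟨m⁻¹, ?_⟩
    filter_upwards [self_mem_nhdsWithin] with t ht
    have ht0 : (0:ℝ) < t := ht
    have h1 := hml t ht0.le
    rw [hf]
    simp only [norm_inv, Real.norm_eq_abs, neg_zero, Real.rpow_zero,
      abs_one, mul_one]
    exact inv_anti₀ hm h1
  have hd := mellin_hasDerivAt_of_isBigO_rpow (a := 1) (b := 0) (s := (α:ℂ)) hfc hf_top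
    (by simpa using hα1) hf_bot (by simpa using hα0)
  -- the closed form
  set S : ℂ := Complex.sin ((Real.pi:ℂ) * (α:ℂ)) with hS
  set C : ℂ := Complex.cos ((Real.pi:ℂ) * (α:ℂ)) with hC
  have hsinR : (0:ℝ) < Real.sin (Real.pi * α) := by
    apply Real.sin_pos_of_pos_of_lt_pi
    · positivity
    · nlinarith [Real.pi_pos]
  have hS0 : S ≠ 0 := by
    rw [hS, show (Real.pi:ℂ) * (α:ℂ) = ((Real.pi * α : ℝ):ℂ) by push_cast; ring,
      ← Complex.ofReal_sin]
    exact_mod_cast hsinR.ne'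
  set R : ℂ → ℂ := fun w => ↑Real.pi / Complex.sin (Real.pi * w) * z ^ (w - 1) with hR
  have heq : mellin f =ᶠ[nhds (α:ℂ)] R := by
    have hopen : IsOpen {s : ℂ | 0 < s.re ∧ s.re < 1} :=
      (isOpen_lt continuous_const Complex.continuous_re).inter
        (isOpen_lt Complex.continuous_re continuous_const)
    filter_upwards [hopen.mem_nhds (by constructor <;> simpa)] with s hs
    show mellin f s = ↑Real.pi / Complex.sin (Real.pi * s) * z ^ (s - 1)
    rw [← eval_slit hs.1 hs.2 hzslit, mellin]
    apply setIntegral_congr_fun measurableSet_Ioi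
    intro t ht
    rw [hf]
    simp only [smul_eq_mul, div_eq_mul_inv]
  -- derivative of R at α
  have dmul : HasDerivAt (fun w : ℂ => (Real.pi:ℂ) * w) ((Real.pi:ℂ)) (α:ℂ) := by
    simpa using (hasDerivAt_id ((α:ℂ))).const_mul ((Real.pi:ℂ))
  have d1 : HasDerivAt (fun w : ℂ => Complex.sin ((Real.pi:ℂ) * w)) (C * (Real.pi:ℂ)) (α:ℂ) :=
    (Complex.hasDerivAt_sin ((Real.pi:ℂ) * (α:ℂ))).comp (α:ℂ) dmul
  have d2 : HasDerivAt (fun w : ℂ => (Real.pi:ℂ) / Complex.sin ((Real.pi:ℂ) * w))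
      ((0 * S - (Real.pi:ℂ) * (C * (Real.pi:ℂ))) / S ^ 2) (α:ℂ) :=
    (hasDerivAt_const ((α:ℂ)) ((Real.pi:ℂ))).div d1 hS0
  have d3 : HasDerivAt (fun w : ℂ => z ^ (w - 1))
      (z ^ ((α:ℂ) - 1) * Complex.log z * 1) (α:ℂ) :=
    ((hasDerivAt_id ((α:ℂ))).sub_const 1).const_cpow (Or.inl hzne)
  have dR : HasDerivAt R
      ((0 * S - (Real.pi:ℂ) * (C * (Real.pi:ℂ))) / S ^ 2 * z ^ ((α:ℂ) - 1)
        + (Real.pi:ℂ) / S * (z ^ ((α:ℂ) - 1) * Complex.log z * 1)) (α:ℂ) := d2.mul d3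
  have key : mellin (fun t => Real.log t • f t) (α:ℂ)
      = (0 * S - (Real.pi:ℂ) * (C * (Real.pi:ℂ))) / S ^ 2 * z ^ ((α:ℂ) - 1)
        + (Real.pi:ℂ) / S * (z ^ ((α:ℂ) - 1) * Complex.log z * 1) :=
    hd.2.unique (dR.congr_of_eventuallyEq heq)
  have hLHS : (∫ y in Set.Ioi (0:ℝ), (y : ℂ) ^ ((α : ℂ) - 1) * ((Real.log y : ℝ) : ℂ)
      / ((y : ℂ) + z)) = mellin (fun t => Real.log t • f t) (α:ℂ) := by
    rw [mellin]
    apply setIntegral_congr_fun measurableSet_Ioi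
    intro t ht
    rw [hf]
    simp only [Complex.real_smul, smul_eq_mul, div_eq_mul_inv]
    ring
  rw [hLHS, key]
  -- final algebra
  have hcos : ((Real.cos (α * Real.pi) : ℝ) : ℂ) = C := by
    rw [hC, show (Real.pi:ℂ) * (α:ℂ) = ((α * Real.pi : ℝ):ℂ) by push_cast; ring,
      ← Complex.ofReal_cos]
  have hsin : ((Real.sin (α * Real.pi) : ℝ) : ℂ) = S := by
    rw [hS, show (Real.pi:ℂ) * (α:ℂ) = ((α * Real.pi : ℝ):ℂ) by push_cast; ring,
      ← Complex.ofReal_sin]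
  rw [Complex.ofReal_div, Complex.ofReal_div, hcos, hsin]
  field_simp
  ring
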